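/- arXiv:1905.06395 — 3 statements merged into one kernel-verified Lean document; each statement's English description precedes it below -/
import Mathlib

section
/- Let $d \geq 1$ and $s \in (0,1/2)$. Then $\int_0^{r_0} \left(\int_0^{\sqrt{r_0^2 - t^2}} \frac{t\, r^{d-2}}{(t^2 + r^2)^{(d+2s)/2}}\,dr\right) dt = \frac{r_0^{1-2s}}{(d-1)(1-2s)}$ for every $r_0 > 0$, provided $d \geq 2$. -/
open MeasureTheory Set intervalIntegral

lemma inner_t (α r b : ℝ) (hα : 1 < α) (hr : 0 < r) :
    ∫ t in (0:ℝ)..b, t * (t^2 + r^2) ^ (-α) =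
      ((b^2 + r^2) ^ (1-α) - (r^2) ^ (1-α)) / (2*(1-α)) := by
  have h1α : (1:ℝ) - α ≠ 0 := by linarith
  have key : ∀ t ∈ uIcc (0:ℝ) b,
      HasDerivAt (fun t : ℝ => (t^2 + r^2) ^ (1-α) / (2*(1-α)))
        (t * (t^2 + r^2) ^ (-α)) t := by
    intro t _
    have hpos : (0:ℝ) < t^2 + r^2 := by positivity
    have h1 : HasDerivAt (fun t : ℝ => t^2 + r^2) (2*t) t := by
      simpa using ((hasDerivAt_pow 2 t).add_const (r^2))
    have h2 := (h1.rpow_const (p := 1-α) (Or.inl hpos.ne')).div_const (2*(1-α))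
    refine h2.congr_deriv ?_
    rw [show (1:ℝ) - α - 1 = -α by ring]
    field_simp
  have hint : IntervalIntegrable (fun t : ℝ => t * (t^2 + r^2) ^ (-α)) volume 0 b := by
    apply Continuous.intervalIntegrable
    have : Continuous fun t : ℝ => (t^2 + r^2) ^ (-α) := by
      apply Continuous.rpow_const (by continuity)
      intro t; left; positivity
    exact continuous_id.mul this
  rw [intervalIntegral.integral_eq_sub_of_hasDerivAt key hint]
  rw [div_sub_div_same]
  norm_num

lemma inner_val (α q r₀ r : ℝ) (hα : 1 < α) (hr : 0 < r) (hrr : r < r₀) (hr₀ : 0 < r₀) :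
    ∫ t in (0:ℝ)..Real.sqrt (r₀^2 - r^2), t * r ^ q / (t^2 + r^2) ^ α
      = r ^ q * (r₀ ^ (2-2*α) - r ^ (2-2*α)) / (2*(1-α)) := by
  have hb : (Real.sqrt (r₀^2 - r^2))^2 = r₀^2 - r^2 := Real.sq_sqrt (by nlinarith)
  have hrw : ∀ t : ℝ, t * r ^ q / (t^2 + r^2) ^ α = r ^ q * (t * (t^2 + r^2) ^ (-α)) := by
    intro t
    rw [Real.rpow_neg (by positivity)]
    field_simp
  simp_rw [hrw]
  rw [intervalIntegral.integral_const_mul, inner_t α r _ hα hr, hb,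
    show r₀^2 - r^2 + r^2 = r₀^2 by ring]
  have h2 : (r₀^2 : ℝ) ^ (1-α) = r₀ ^ (2-2*α) := by
    rw [← Real.rpow_natCast r₀ 2, ← Real.rpow_mul hr₀.le]
    norm_num
    ring_nf
  have h3 : (r^2 : ℝ) ^ (1-α) = r ^ (2-2*α) := by
    rw [← Real.rpow_natCast r 2, ← Real.rpow_mul hr.le]
    norm_num
    ring_nf
  rw [h2, h3, mul_div_assoc]

theorem stmt6 (d : ℕ) (hd : 2 ≤ d) (s : ℝ) (hs : s ∈ Set.Ioo (0:ℝ) (1/2))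
    (r₀ : ℝ) (hr₀ : 0 < r₀) :
    (∫ t in (0:ℝ)..r₀, ∫ r in (0:ℝ)..Real.sqrt (r₀^2 - t^2),
        t * r ^ ((d:ℝ) - 2) / (t^2 + r^2) ^ (((d:ℝ) + 2*s)/2)) =
      r₀ ^ (1 - 2*s) / (((d:ℝ) - 1) * (1 - 2*s)) := by
  obtain ⟨hs0, hs1⟩ := hs
  have hdR : (2:ℝ) ≤ (d:ℝ) := by exact_mod_cast hd
  set α : ℝ := ((d:ℝ) + 2*s)/2 with hαdef
  have hα : 1 < α := by rw [hαdef]; linarith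
  set q : ℝ := (d:ℝ) - 2 with hqdef
  have hq : (-1:ℝ) < q := by rw [hqdef]; linarith
  have hqc : (-1:ℝ) < q + (2-2*α) := by rw [hqdef, hαdef]; linarith
  set f : ℝ × ℝ → ℝ := fun p => p.1 * p.2 ^ q / (p.1^2 + p.2^2) ^ α with hfdef
  set S : Set (ℝ × ℝ) := {p : ℝ × ℝ | 0 < p.1 ∧ 0 < p.2 ∧ p.1^2 + p.2^2 < r₀^2} with hSdef
  set I : ℝ × ℝ → ℝ := S.indicator f with hIdef
  -- measurability
  have hfm : Measurable f := by
    rw [hfdef]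
    fun_prop
  have hSm : MeasurableSet S := by
    have : S = {p : ℝ × ℝ | 0 < p.1} ∩ ({p | 0 < p.2} ∩ {p | p.1^2 + p.2^2 < r₀^2}) := rfl
    rw [this]
    exact ((isOpen_lt continuous_const continuous_fst).inter
      ((isOpen_lt continuous_const continuous_snd).inter
        (isOpen_lt ((continuous_fst.pow 2).add (continuous_snd.pow 2)) continuous_const))).measurableSet
  -- slice characterizations
  have hslice1 : ∀ t r : ℝ, (t, r) ∈ S ↔ t ∈ Ioo 0 r₀ ∧ r ∈ Ioo 0 (Real.sqrt (r₀^2 - t^2)) := by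
    intro t r
    constructor
    · rintro ⟨ht, hr, hlt⟩
      exact ⟨⟨ht, by nlinarith⟩, hr, (Real.lt_sqrt hr.le).2 (by nlinarith)⟩
    · rintro ⟨⟨ht, ht2⟩, hr, hlt⟩
      have := (Real.lt_sqrt hr.le).1 hlt
      exact ⟨ht, hr, by nlinarith⟩
  have hslice2 : ∀ t r : ℝ, (t, r) ∈ S ↔ r ∈ Ioo 0 r₀ ∧ t ∈ Ioo 0 (Real.sqrt (r₀^2 - r^2)) := by
    intro t r
    constructor
    · rintro ⟨ht, hr, hlt⟩
      exact ⟨⟨hr, by nlinarith⟩, ht, (Real.lt_sqrt ht.le).2 (by nlinarith)⟩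
    · rintro ⟨⟨hr, hr2⟩, ht, hlt⟩
      have := (Real.lt_sqrt ht.le).1 hlt
      exact ⟨ht, hr, by nlinarith⟩
  -- nonnegativity
  have hI0 : ∀ p : ℝ × ℝ, 0 ≤ I p := by
    intro p
    apply indicator_nonneg
    rintro ⟨t, r⟩ ⟨ht, hr, -⟩
    exact div_nonneg (mul_nonneg ht.le (Real.rpow_nonneg hr.le q))
      (Real.rpow_nonneg (by positivity) α)
  -- slices in t as indicators
  have hindic2 : ∀ r : ℝ, r ∈ Ioo (0:ℝ) r₀ →
      (fun t => I (t, r)) = (Ioo 0 (Real.sqrt (r₀^2 - r^2))).indicator (fun t => f (t, r)) := by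
    intro r hr
    funext t
    show S.indicator f (t, r) = _
    by_cases h : (t, r) ∈ S
    · rw [indicator_of_mem h, indicator_of_mem ((hslice2 t r).1 h).2]
    · rw [indicator_of_notMem h, indicator_of_notMem]
      exact fun hmem => h ((hslice2 t r).2 ⟨hr, hmem⟩)
  have hempty2 : ∀ r : ℝ, r ∉ Ioo (0:ℝ) r₀ → (fun t => I (t, r)) = fun _ => 0 := by
    intro r hr
    funext t
    show S.indicator f (t, r) = 0
    exact indicator_of_notMem (fun hmem => hr ((hslice2 t r).1 hmem).1) _
  have hempty1 : ∀ t : ℝ, t ∉ Ioo (0:ℝ) r₀ → (fun r => I (t, r)) = fun _ => 0 := by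
    intro t ht
    funext r
    show S.indicator f (t, r) = 0
    exact indicator_of_notMem (fun hmem => ht ((hslice1 t r).1 hmem).1) _
  -- integrable slices
  have hslice_int : ∀ r : ℝ, Integrable (fun t => I (t, r)) := by
    intro r
    by_cases hr : r ∈ Ioo (0:ℝ) r₀
    · rw [hindic2 r hr, MeasureTheory.integrable_indicator_iff measurableSet_Ioo]
      have hr1 : 0 < r := hr.1
      have hcont : Continuous (fun t : ℝ => f (t, r)) := by
        show Continuous fun t : ℝ => t * r ^ q / (t^2 + r^2) ^ α
        apply Continuous.div
        · exact continuous_id.mul continuous_const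
        · apply Continuous.rpow_const ((continuous_pow 2).add continuous_const)
          intro t; left; show t^2 + r^2 ≠ 0; positivity
        · intro t
          exact (Real.rpow_pos_of_pos (by positivity) α).ne'
      exact (intervalIntegrable_iff_integrableOn_Ioo_of_le (Real.sqrt_nonneg _)).1
        (hcont.intervalIntegrable _ _)
    · rw [hempty2 r hr]
      exact integrable_zero _ _ _
  -- value of the t-slice integral
  have hinner : ∀ r ∈ Ioo (0:ℝ) r₀,
      (∫ t, I (t, r)) = r ^ q * (r₀ ^ (2-2*α) - r ^ (2-2*α)) / (2*(1-α)) := by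
    intro r hr
    rw [hindic2 r hr, MeasureTheory.integral_indicator measurableSet_Ioo, ← integral_Ioc_eq_integral_Ioo,
      ← intervalIntegral.integral_of_le (Real.sqrt_nonneg _)]
    exact inner_val α q r₀ r hα hr.1 hr.2 hr₀
  -- the auxiliary integrable dominating function
  have hg_int : Integrable ((Ioo (0:ℝ) r₀).indicator
      (fun r => r ^ q * (r₀ ^ (2-2*α) - r ^ (2-2*α)) / (2*(1-α)))) := by
    rw [MeasureTheory.integrable_indicator_iff measurableSet_Ioo]
    have h1 : IntegrableOn (fun r : ℝ => r₀ ^ (2-2*α) * r ^ q - r ^ (q + (2-2*α))) (Ioo 0 r₀) :=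
      (((intervalIntegrable_iff_integrableOn_Ioo_of_le hr₀.le).1
          (intervalIntegrable_rpow' hq)).const_mul _).sub
        ((intervalIntegrable_iff_integrableOn_Ioo_of_le hr₀.le).1 (intervalIntegrable_rpow' hqc))
    apply IntegrableOn.congr_fun (h1.div_const (2*(1-α))) _ measurableSet_Ioo
    intro r hr
    simp only
    rw [Real.rpow_add hr.1]
    ring
  -- Fubini condition (ii)
  have hnorm_eq : (fun r => ∫ t, ‖I (t, r)‖) = (Ioo (0:ℝ) r₀).indicator
      (fun r => r ^ q * (r₀ ^ (2-2*α) - r ^ (2-2*α)) / (2*(1-α))) := by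
    funext r
    have hnrm : (fun t => ‖I (t, r)‖) = fun t => I (t, r) :=
      funext fun t => Real.norm_of_nonneg (hI0 (t, r))
    by_cases hr : r ∈ Ioo (0:ℝ) r₀
    · rw [indicator_of_mem hr, hnrm, hinner r hr]
    · rw [indicator_of_notMem hr, hnrm, hempty2 r hr, MeasureTheory.integral_zero]
  have hIint : Integrable I ((volume : Measure ℝ).prod volume) := by
    rw [integrable_prod_iff' ((hfm.indicator hSm).aestronglyMeasurable)]
    exact ⟨Filter.Eventually.of_forall hslice_int, hnorm_eq ▸ hg_int⟩
  -- LHS as full-plane iterated integral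
  have hLHS : (∫ t in (0:ℝ)..r₀, ∫ r in (0:ℝ)..Real.sqrt (r₀^2 - t^2),
      t * r ^ q / (t^2 + r^2) ^ α) = ∫ t, ∫ r, I (t, r) := by
    have hz : ∀ t ∉ Ioo (0:ℝ) r₀, (∫ r, I (t, r)) = 0 := by
      intro t ht
      rw [hempty1 t ht, MeasureTheory.integral_zero]
    rw [intervalIntegral.integral_of_le hr₀.le, integral_Ioc_eq_integral_Ioo,
      ← setIntegral_eq_integral_of_forall_compl_eq_zero hz]
    apply setIntegral_congr_fun measurableSet_Ioo
    intro t ht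
    have hindic1 : (fun r => I (t, r)) = (Ioo 0 (Real.sqrt (r₀^2 - t^2))).indicator
        (fun r => f (t, r)) := by
      funext r
      show S.indicator f (t, r) = _
      by_cases h : (t, r) ∈ S
      · rw [indicator_of_mem h, indicator_of_mem ((hslice1 t r).1 h).2]
      · rw [indicator_of_notMem h, indicator_of_notMem]
        exact fun hmem => h ((hslice1 t r).2 ⟨ht, hmem⟩)
    show (∫ r in (0:ℝ)..Real.sqrt (r₀^2 - t^2), t * r ^ q / (t^2 + r^2) ^ α) = ∫ r, I (t, r)
    rw [hindic1, MeasureTheory.integral_indicator measurableSet_Ioo, ← integral_Ioc_eq_integral_Ioo,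
      ← intervalIntegral.integral_of_le (Real.sqrt_nonneg _)]
  rw [hLHS, integral_integral_swap (f := fun t r => I (t, r)) hIint]
  have hz2 : ∀ r ∉ Ioo (0:ℝ) r₀, (∫ t, I (t, r)) = 0 := by
    intro r hr
    rw [hempty2 r hr, MeasureTheory.integral_zero]
  rw [← setIntegral_eq_integral_of_forall_compl_eq_zero hz2,
    setIntegral_congr_fun measurableSet_Ioo hinner]
  -- final computation
  rw [← integral_Ioc_eq_integral_Ioo, ← intervalIntegral.integral_of_le hr₀.le]
  have hcongr : ∀ᵐ x : ℝ, x ∈ Set.uIoc (0:ℝ) r₀ →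
      x ^ q * (r₀ ^ (2-2*α) - x ^ (2-2*α)) / (2*(1-α)) =
        (r₀ ^ (2-2*α) * x ^ q - x ^ (q + (2-2*α))) / (2*(1-α)) := by
    filter_upwards with x hx
    have hx0 : 0 < x := by
      rw [uIoc_of_le hr₀.le] at hx
      exact hx.1
    rw [Real.rpow_add hx0]
    ring
  rw [intervalIntegral.integral_congr_ae hcongr, intervalIntegral.integral_div,
    intervalIntegral.integral_sub ((intervalIntegrable_rpow' hq).const_mul _)
      (intervalIntegrable_rpow' hqc),
    intervalIntegral.integral_const_mul, integral_rpow (Or.inl hq), integral_rpow (Or.inl hqc),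
    Real.zero_rpow (by linarith : q + 1 ≠ 0), Real.zero_rpow (by linarith : q + (2-2*α) + 1 ≠ 0),
    sub_zero, sub_zero]
  have e1 : q + 1 = (d:ℝ) - 1 := by rw [hqdef]; ring
  have e2 : q + (2-2*α) + 1 = 1 - 2*s := by rw [hqdef, hαdef]; ring
  have e3 : 2*(1-α) = 1 - 2*s - ((d:ℝ) - 1) := by rw [hαdef]; ring
  have hcomb : r₀ ^ (2-2*α) * r₀ ^ ((d:ℝ) - 1) = r₀ ^ (1 - 2*s) := by
    rw [← Real.rpow_add hr₀]
    congr 1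
    rw [hαdef]
    ring
  rw [e1, e2, e3, ← mul_div_assoc, hcomb]
  have h1 : ((d:ℝ) - 1) ≠ 0 := by linarith
  have h2 : (1:ℝ) - 2*s ≠ 0 := by linarith
  have h3 : (1 - 2*s - ((d:ℝ) - 1)) ≠ 0 := by
    have : (1:ℝ) - 2*s < 1 := by linarith
    have : (1:ℝ) ≤ (d:ℝ) - 1 := by linarith
    linarith
  field_simp
end

section
/- Let $\Omega \subset \mathbb{R}^d$ be a bounded measurable set, $s \in (0,1/2)$, and let $F_s(\rho) = \int_0^\rho \frac{\rho-r}{(1+r^2)^{(d+1+2s)/2}}\,dr$, extended to negative arguments by $F_s(\rho) = F_s(|\rho|)$ (it is even). Define $I_s[v] = \iint_{Q_\Omega} F_s\left(\frac{v(x)-v(y)}{|x-y|}\right)\frac{dx\,dy}{|x-y|^{d+2s-1}}$, where $Q_\Omega = (\mathbb{R}^d\times\mathbb{R}^d)\setminus(\Omega^c\times\Omega^c)$. Then for every measurable $v \colon \mathbb{R}^d \to \mathbb{R}$, $|v|_{W^{2s}_1(\Omega)} \leq C_1 + C_2\, I_s[v]$, where $C_1 = \iint_{\Omega\times\Omega}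 |x-y|^{-(d+2s-1)}\,dx\,dy < \infty$ and $C_2 = 1/F_s'(1)$, and $|v|_{W^{2s}_1(\Omega)} = \iint_{\Omega\times\Omega}\frac{|v(x)-v(y)|}{|x-y|^{d+2s}}\,dx\,dy$. -/
open MeasureTheory Set Real

lemma keyineq (β : ℝ) {ρ : ℝ} (hρ : 0 ≤ ρ) :
    ρ ≤ 1 + (1 / ∫ r in (0:ℝ)..1, (1+r^2) ^ (-β)) * (∫ r in (0:ℝ)..ρ, (ρ - r) / (1+r^2) ^ β) := by
  set c : ℝ → ℝ := fun r => (1+r^2) ^ (-β) with hc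
  have hcont : Continuous c := by
    apply Continuous.rpow_const (by continuity)
    intro x; left; positivity
  have hcpos : ∀ r : ℝ, 0 < c r := fun r => rpow_pos_of_pos (by positivity) _
  have hJ : 0 < ∫ r in (0:ℝ)..1, c r :=
    intervalIntegral.intervalIntegral_pos_of_pos (hcont.intervalIntegrable _ _) hcpos zero_lt_one
  set J := ∫ r in (0:ℝ)..1, c r with hJdef
  have hrw : ∀ x r : ℝ, (x - r) / (1+r^2) ^ β = (x - r) * c r := by
    intro x r
    simp only [hc]
    rw [Real.rpow_neg (by positivity), div_eq_mul_inv]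
  simp only [hrw]
  have hcont2 : Continuous fun r => (ρ - r) * c r := (continuous_const.sub continuous_id).mul hcont
  have hFnn : 0 ≤ ∫ r in (0:ℝ)..ρ, (ρ - r) * c r := by
    apply intervalIntegral.integral_nonneg hρ
    intro u hu
    exact mul_nonneg (by linarith [hu.2]) (hcpos u).le
  rcases le_or_gt ρ 1 with h1 | h1
  · have : 0 ≤ (1 / J) * ∫ r in (0:ℝ)..ρ, (ρ - r) * c r :=
      mul_nonneg (by positivity) hFnn
    linarith
  · have step1 : (ρ - 1) * J ≤ ∫ r in (0:ℝ)..1, (ρ - r) * c r := by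
      rw [hJdef, ← intervalIntegral.integral_const_mul]
      apply intervalIntegral.integral_mono_on zero_le_one
        ((hcont.intervalIntegrable _ _).const_mul _)
        (((continuous_const.sub continuous_id).mul hcont).intervalIntegrable _ _)
      intro x hx
      exact mul_le_mul_of_nonneg_right (show ρ - 1 ≤ ρ - x by simp at hx; linarith [hx.2]) (hcpos x).le
    have step2 : (∫ r in (0:ℝ)..1, (ρ - r) * c r) ≤ ∫ r in (0:ℝ)..ρ, (ρ - r) * c r := by
      apply intervalIntegral.integral_mono_interval le_rfl zero_le_one h1.le
      · filter_upwards [ae_restrict_mem measurableSet_Ioc] with x hx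
        exact mul_nonneg (by linarith [hx.2]) (hcpos x).le
      · exact hcont2.intervalIntegrable _ _
    have : ρ - 1 ≤ (1 / J) * ∫ r in (0:ℝ)..ρ, (ρ - r) * c r := by
      rw [one_div, inv_mul_eq_div, le_div_iff₀ hJ]
      linarith
    linarith

lemma ballfin (d : ℕ) {α : ℝ} (h0 : 0 < α) (hα : α < d) (R : ℝ) :
    ∫⁻ x in Metric.closedBall (0 : EuclideanSpace ℝ (Fin d)) R,
      ENNReal.ofReal (‖x‖ ^ (-α)) < ⊤ := by
  set E' := EuclideanSpace ℝ (Fin d)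
  set μ' := (volume : Measure E').restrict (Metric.closedBall (0 : E') R) with hμ'
  have hmeas : Measurable fun x : E' => ‖x‖ ^ (-α) := by fun_prop
  have hBfin : (volume : Measure E') (Metric.closedBall 0 R) < ⊤ := measure_closedBall_lt_top
  rw [lintegral_eq_lintegral_meas_le μ'
    (Filter.Eventually.of_forall fun x => rpow_nonneg (norm_nonneg _) _) hmeas.aemeasurable]
  have hsub : ∀ t : ℝ, 0 < t →
      {a : E' | t ≤ ‖a‖ ^ (-α)} ⊆ Metric.closedBall 0 (t ^ (-α)⁻¹) := by
    intro t ht a ha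
    simp only [mem_setOf_eq] at ha
    rcases eq_or_ne a 0 with rfl | ha0
    · rw [norm_zero, Real.zero_rpow (by simpa using h0.ne')] at ha; linarith
    · have hna : 0 < ‖a‖ := norm_pos_iff.2 ha0
      have := Real.rpow_le_rpow_of_nonpos ht ha
        (z := (-α)⁻¹) (by simp [inv_nonpos, h0.le])
      rw [Real.rpow_rpow_inv (norm_nonneg _) (by simpa using h0.ne')] at this
      simpa [mem_closedBall_zero_iff, hna.le] using this
  have hμle : ∀ t : ℝ, μ' {a : E' | t ≤ ‖a‖ ^ (-α)} ≤ volume (Metric.closedBall (0:E') R) := by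
    intro t
    exact (measure_mono (subset_univ _)).trans (by rw [Measure.restrict_apply_univ])
  calc ∫⁻ t in Ioi (0:ℝ), μ' {a : E' | t ≤ ‖a‖ ^ (-α)}
      ≤ ∫⁻ t in Ioc 0 1 ∪ Ioi 1, μ' {a : E' | t ≤ ‖a‖ ^ (-α)} :=
        lintegral_mono_set Ioi_subset_Ioc_union_Ioi
    _ ≤ (∫⁻ t in Ioc 0 1, μ' {a : E' | t ≤ ‖a‖ ^ (-α)})
        + ∫⁻ t in Ioi 1, μ' {a : E' | t ≤ ‖a‖ ^ (-α)} := lintegral_union_le _ _ _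
    _ < ⊤ := by
        refine ENNReal.add_lt_top.2 ⟨?_, ?_⟩
        · calc (∫⁻ t in Ioc (0:ℝ) 1, μ' {a : E' | t ≤ ‖a‖ ^ (-α)})
              ≤ ∫⁻ _ in Ioc (0:ℝ) 1, volume (Metric.closedBall (0:E') R) :=
                lintegral_mono fun t => hμle t
            _ = volume (Metric.closedBall (0:E') R) * volume (Ioc (0:ℝ) 1) :=
                setLIntegral_const _ _
            _ < ⊤ := ENNReal.mul_lt_top hBfin (by simp [Real.volume_Ioc])
        · have hdim : Module.finrank ℝ E' = d := finrank_euclideanSpace_fin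
          have hbd : ∀ t ∈ Ioi (1:ℝ), μ' {a : E' | t ≤ ‖a‖ ^ (-α)}
              ≤ ENNReal.ofReal (t ^ ((-α)⁻¹ * d)) * volume (Metric.ball (0:E') 1) := by
            intro t ht
            have ht0 : (0:ℝ) < t := lt_trans zero_lt_one ht
            have h1 : μ' {a : E' | t ≤ ‖a‖ ^ (-α)}
                ≤ volume (Metric.closedBall (0:E') (t ^ (-α)⁻¹)) :=
              le_trans (Measure.restrict_le_self _) (measure_mono (hsub t ht0))
            rw [Measure.addHaar_closedBall _ _ (rpow_nonneg ht0.le _), hdim] at h1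
            refine h1.trans (le_of_eq ?_)
            congr 1
            rw [← Real.rpow_natCast (t ^ (-α)⁻¹) d, ← Real.rpow_mul ht0.le]
          calc (∫⁻ t in Ioi (1:ℝ), μ' {a : E' | t ≤ ‖a‖ ^ (-α)})
              ≤ ∫⁻ t in Ioi (1:ℝ),
                  ENNReal.ofReal (t ^ ((-α)⁻¹ * d)) * volume (Metric.ball (0:E') 1) :=
                setLIntegral_mono' measurableSet_Ioi hbd
            _ = (∫⁻ t in Ioi (1:ℝ), ENNReal.ofReal (t ^ ((-α)⁻¹ * d)))
                  * volume (Metric.ball (0:E') 1) :=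
                lintegral_mul_const' _ _ measure_ball_lt_top.ne
            _ < ⊤ := by
                refine ENNReal.mul_lt_top ?_ measure_ball_lt_top
                have hexp : (-α)⁻¹ * d < -1 := by
                  have h1 : (-α)⁻¹ * d = -(α⁻¹ * d) := by
                    rw [← neg_inv]; ring
                  rw [h1, neg_lt_neg_iff, lt_inv_mul_iff₀ h0, mul_one]
                  exact hα
                exact (integrableOn_Ioi_rpow_of_lt hexp zero_lt_one).setLIntegral_lt_top

theorem stmt10 (d : ℕ) (hd : 1 ≤ d) (s : ℝ) (hs : s ∈ Set.Ioo (0:ℝ) (1/2))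
    (Ω : Set (EuclideanSpace ℝ (Fin d))) (hΩb : Bornology.IsBounded Ω)
    (hΩm : MeasurableSet Ω)
    (F : ℝ → ℝ)
    (hF : F = fun ρ => ∫ r in (0:ℝ)..|ρ|, (|ρ| - r) / (1 + r^2) ^ (((d:ℝ) + 1 + 2*s)/2))
    (C₂ : ℝ) (hC₂ : C₂ = 1 / (∫ r in (0:ℝ)..1, (1 + r^2) ^ (-(((d:ℝ) + 1 + 2*s)/2))))
    (v : EuclideanSpace ℝ (Fin d) → ℝ) (hv : Measurable v) :
    (∫⁻ p in Ω ×ˢ Ω, ENNReal.ofReal (1 / ‖p.1 - p.2‖ ^ ((d:ℝ) + 2*s - 1))) ≠ ⊤ ∧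
    (∫⁻ p in Ω ×ˢ Ω, ENNReal.ofReal (|v p.1 - v p.2| / ‖p.1 - p.2‖ ^ ((d:ℝ) + 2*s)))
      ≤ (∫⁻ p in Ω ×ˢ Ω, ENNReal.ofReal (1 / ‖p.1 - p.2‖ ^ ((d:ℝ) + 2*s - 1)))
        + ENNReal.ofReal C₂ *
          ∫⁻ p in (Ωᶜ ×ˢ Ωᶜ)ᶜ,
            ENNReal.ofReal (F ((v p.1 - v p.2) / ‖p.1 - p.2‖) / ‖p.1 - p.2‖ ^ ((d:ℝ) + 2*s - 1)) := by
  obtain ⟨hs0, hs2⟩ := hs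
  have hd1 : (1:ℝ) ≤ d := by exact_mod_cast hd
  set α : ℝ := (d:ℝ) + 2*s - 1 with hαdef
  set β : ℝ := ((d:ℝ) + 1 + 2*s)/2 with hβdef
  have hα0 : 0 < α := by rw [hαdef]; linarith
  have hαd : α < d := by rw [hαdef]; linarith
  -- kernel rewriting
  have hone : ∀ z : EuclideanSpace ℝ (Fin d), (1:ℝ)/‖z‖ ^ α = ‖z‖ ^ (-α) := fun z => by
    rw [Real.rpow_neg (norm_nonneg _), one_div]
  obtain ⟨R, hR⟩ := hΩb.subset_closedBall 0
  have hΩfin : volume Ω < ⊤ := (measure_mono hR).trans_lt measure_closedBall_lt_top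
  have hKmeas : Measurable fun z : EuclideanSpace ℝ (Fin d) => ENNReal.ofReal (‖z‖ ^ (-α)) := by
    fun_prop
  have hgmeas : Measurable fun p : (EuclideanSpace ℝ (Fin d)) × (EuclideanSpace ℝ (Fin d)) =>
      ENNReal.ofReal (1 / ‖p.1 - p.2‖ ^ α) := by fun_prop
  set M := ∫⁻ z in Metric.closedBall (0 : EuclideanSpace ℝ (Fin d)) (R+R),
      ENNReal.ofReal (‖z‖ ^ (-α)) with hMdef
  have hMfin : M < ⊤ := ballfin d hα0 hαd _
  have hfin : (∫⁻ p in Ω ×ˢ Ω, ENNReal.ofReal (1 / ‖p.1 - p.2‖ ^ α)) ≠ ⊤ := by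
    have heq : (∫⁻ p in Ω ×ˢ Ω, ENNReal.ofReal (1 / ‖p.1 - p.2‖ ^ α))
        = ∫⁻ x in Ω, ∫⁻ y in Ω, ENNReal.ofReal (‖x - y‖ ^ (-α)) := by
      simp_rw [hone]
      rw [Measure.volume_eq_prod, ← Measure.prod_restrict]
      exact lintegral_prod _ ((hKmeas.comp (measurable_fst.sub measurable_snd)).aemeasurable)
    have hinner : ∀ x ∈ Ω, (∫⁻ y in Ω, ENNReal.ofReal (‖x - y‖ ^ (-α))) ≤ M := by
      intro x hx
      have hsub2 : Ω ⊆ Metric.closedBall x (R+R) := by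
        intro y hy
        simp only [Metric.mem_closedBall]
        calc dist y x ≤ dist y 0 + dist 0 x := dist_triangle _ _ _
          _ ≤ R + R := add_le_add (hR hy) (by rw [dist_comm]; exact hR hx)
      have hpre : Metric.closedBall x (R+R)
          = (fun y => x - y) ⁻¹' Metric.closedBall (0 : EuclideanSpace ℝ (Fin d)) (R+R) := by
        ext y
        simp only [mem_preimage, Metric.mem_closedBall, mem_closedBall_zero_iff, dist_eq_norm, sub_zero]
        rw [norm_sub_rev]
      calc (∫⁻ y in Ω, ENNReal.ofReal (‖x - y‖ ^ (-α)))
          ≤ ∫⁻ y in Metric.closedBall x (R+R), ENNReal.ofReal (‖x - y‖ ^ (-α)) :=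
            lintegral_mono_set hsub2
        _ = M := by
            rw [hpre, hMdef]
            exact (Measure.measurePreserving_sub_left volume x).setLIntegral_comp_preimage
              measurableSet_closedBall hKmeas
    rw [heq]
    refine ne_of_lt (lt_of_le_of_lt ?_ (show M * volume Ω < ⊤ from
      ENNReal.mul_lt_top hMfin hΩfin))
    calc (∫⁻ x in Ω, ∫⁻ y in Ω, ENNReal.ofReal (‖x - y‖ ^ (-α)))
        ≤ ∫⁻ _ in Ω, M := setLIntegral_mono' hΩm hinner
      _ = M * volume Ω := setLIntegral_const _ _
  refine ⟨hfin, ?_⟩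
  -- part 2
  have hJ : 0 < ∫ r in (0:ℝ)..1, (1+r^2) ^ (-β) := by
    apply intervalIntegral.intervalIntegral_pos_of_pos
    · apply Continuous.intervalIntegrable
      apply Continuous.rpow_const (by continuity)
      intro x; left; positivity
    · intro r; exact rpow_pos_of_pos (by positivity) _
    · exact zero_lt_one
  have hC2nn : 0 ≤ C₂ := by rw [hC₂]; positivity
  have hFnn : ∀ x : ℝ, 0 ≤ F x := by
    intro x
    rw [hF]
    apply intervalIntegral.integral_nonneg (abs_nonneg x)
    intro u hu
    have hpow : (0:ℝ) < (1+u^2) ^ β := rpow_pos_of_pos (by positivity) _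
    exact div_nonneg (by linarith [hu.2]) hpow.le
  have hds : ((d:ℝ) + 2*s) ≠ 0 := by positivity
  have hpt : ∀ p : (EuclideanSpace ℝ (Fin d)) × (EuclideanSpace ℝ (Fin d)),
      ENNReal.ofReal (|v p.1 - v p.2| / ‖p.1 - p.2‖ ^ ((d:ℝ) + 2*s))
        ≤ ENNReal.ofReal (1 / ‖p.1 - p.2‖ ^ α)
          + ENNReal.ofReal C₂ *
            ENNReal.ofReal (F ((v p.1 - v p.2) / ‖p.1 - p.2‖) / ‖p.1 - p.2‖ ^ α) := by
    intro p
    rcases (norm_nonneg (p.1 - p.2)).eq_or_lt with ht0 | ht0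
    · rw [← ht0, Real.zero_rpow hds, div_zero, ENNReal.ofReal_zero]
      exact zero_le
    · set t := ‖p.1 - p.2‖ with htdef
      set δ := v p.1 - v p.2 with hδdef
      have hFeq : F (δ / t) = ∫ r in (0:ℝ)..(|δ|/t), (|δ|/t - r) / (1+r^2) ^ β := by
        rw [hF]
        simp only
        rw [abs_div, abs_of_pos ht0]
      have hρnn : 0 ≤ |δ| / t := div_nonneg (abs_nonneg _) ht0.le
      have hkey : |δ| / t ≤ 1 + C₂ * F (δ / t) := by
        rw [hFeq, hC₂]
        exact keyineq β hρnn
      have htα : (0:ℝ) < t ^ α := rpow_pos_of_pos ht0 _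
      have hmain : |δ| / t ^ ((d:ℝ)+2*s) ≤ 1/t^α + C₂ * (F (δ/t)/t^α) := by
        have hsplit : t ^ ((d:ℝ)+2*s) = t ^ α * t := by
          rw [← Real.rpow_add_one (ne_of_gt ht0)]
          congr 1
          rw [hαdef]; ring
        calc |δ| / t ^ ((d:ℝ)+2*s) = (|δ| / t) / t ^ α := by
              rw [hsplit, div_div, mul_comm]
          _ ≤ (1 + C₂ * F (δ/t)) / t ^ α := by gcongr
          _ = 1/t^α + C₂ * (F (δ/t)/t^α) := by ring
      have h1nn : (0:ℝ) ≤ 1/t^α := by positivity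
      have h2nn : 0 ≤ C₂ * (F (δ/t)/t^α) := mul_nonneg hC2nn (div_nonneg (hFnn _) htα.le)
      calc ENNReal.ofReal (|δ| / t ^ ((d:ℝ)+2*s))
          ≤ ENNReal.ofReal (1/t^α + C₂ * (F (δ/t)/t^α)) := ENNReal.ofReal_le_ofReal hmain
        _ = ENNReal.ofReal (1/t^α) + ENNReal.ofReal (C₂ * (F (δ/t)/t^α)) :=
            ENNReal.ofReal_add h1nn h2nn
        _ = ENNReal.ofReal (1/t^α) + ENNReal.ofReal C₂ * ENNReal.ofReal (F (δ/t)/t^α) := by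
            rw [ENNReal.ofReal_mul hC2nn]
  have hss : Ω ×ˢ Ω ⊆ (Ωᶜ ×ˢ Ωᶜ)ᶜ := fun p hp hmem => hmem.1 hp.1
  calc (∫⁻ p in Ω ×ˢ Ω, ENNReal.ofReal (|v p.1 - v p.2| / ‖p.1 - p.2‖ ^ ((d:ℝ) + 2*s)))
      ≤ ∫⁻ p in Ω ×ˢ Ω, (ENNReal.ofReal (1 / ‖p.1 - p.2‖ ^ α)
          + ENNReal.ofReal C₂ *
            ENNReal.ofReal (F ((v p.1 - v p.2) / ‖p.1 - p.2‖) / ‖p.1 - p.2‖ ^ α)) :=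
        lintegral_mono fun p => hpt p
    _ = (∫⁻ p in Ω ×ˢ Ω, ENNReal.ofReal (1 / ‖p.1 - p.2‖ ^ α))
          + ∫⁻ p in Ω ×ˢ Ω, ENNReal.ofReal C₂ *
            ENNReal.ofReal (F ((v p.1 - v p.2) / ‖p.1 - p.2‖) / ‖p.1 - p.2‖ ^ α) :=
        lintegral_add_left hgmeas _
    _ = (∫⁻ p in Ω ×ˢ Ω, ENNReal.ofReal (1 / ‖p.1 - p.2‖ ^ α))
          + ENNReal.ofReal C₂ * ∫⁻ p in Ω ×ˢ Ω,
            ENNReal.ofReal (F ((v p.1 - v p.2) / ‖p.1 - p.2‖) / ‖p.1 - p.2‖ ^ α) := by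
        rw [lintegral_const_mul' _ _ ENNReal.ofReal_ne_top]
    _ ≤ (∫⁻ p in Ω ×ˢ Ω, ENNReal.ofReal (1 / ‖p.1 - p.2‖ ^ α))
          + ENNReal.ofReal C₂ * ∫⁻ p in (Ωᶜ ×ˢ Ωᶜ)ᶜ,
            ENNReal.ofReal (F ((v p.1 - v p.2) / ‖p.1 - p.2‖) / ‖p.1 - p.2‖ ^ α) :=
        add_le_add_right (mul_le_mul_right (lintegral_mono_set hss) _) _
end

section
/- Let $s \in (0,1/2)$, $\Omega \subset \mathbb{R}^d$ a bounded Lipschitz domain, and $g \in L^\infty(\Omega^c)$. Let $u$ minimize the nonlocal area functional $I_s$ over the admissible class $\mathbb{V}^g$ and let $u_h$ minimize $I_s$ over a subset $\mathbb{V}^g_h \subset \mathbb{V}^g$ (a conforming finite element space). Then the geometric error satisfies, for every $v_h \in \mathbb{V}^g_h$, $e_s(u,u_h)^2 = C_{d,s}\iint_{Q_\Omega}\big(G_s(d_u(x,y)) - G_s(d_{u_h}(x,y))\big)\frac{d_u(x,y)-d_{v_h}(x,y)}{|x-y|^{d-1+2s}}\,dx\,dy$, and consequently $e_s(u,u_h)^2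 \leq 2 C_{d,s} K \iint_{Q_\Omega}\frac{|(u-v_h)(x)-(u-v_h)(y)|}{|x-y|^{d+2s}}\,dx\,dy$, where $K = \int_0^\infty (1+r^2)^{-(d+1+2s)/2}\,dr$. -/
open MeasureTheory Set

noncomputable section

/-- `G_s(ρ) = ∫_0^ρ (1+r²)^{-(d+1+2s)/2} dr`. -/
def Gs (d : ℕ) (s ρ : ℝ) : ℝ := ∫ r in (0:ℝ)..ρ, (1 + r^2) ^ (-(((d:ℝ) + 1 + 2*s)/2))

/-- `K = ∫_0^∞ (1+r²)^{-(d+1+2s)/2} dr = sup |G_s|`. -/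
def Ks (d : ℕ) (s : ℝ) : ℝ := ∫ r in Set.Ioi (0:ℝ), (1 + r^2) ^ (-(((d:ℝ) + 1 + 2*s)/2))

/-- difference quotient `d_u(x,y) = (u(x)-u(y))/|x-y|`. -/
def dq {d : ℕ} (u : EuclideanSpace ℝ (Fin d) → ℝ)
    (p : EuclideanSpace ℝ (Fin d) × EuclideanSpace ℝ (Fin d)) : ℝ :=
  (u p.1 - u p.2) / ‖p.1 - p.2‖

/-- `Q_Ω = (ℝᵈ×ℝᵈ) \ (Ωᶜ×Ωᶜ)`. -/
def QΩ {d : ℕ} (Ω : Set (EuclideanSpace ℝ (Fin d))) :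
    Set (EuclideanSpace ℝ (Fin d) × EuclideanSpace ℝ (Fin d)) := (Ωᶜ ×ˢ Ωᶜ)ᶜ

/-- scaling constant `C_{d,s} = (1-2s)/α_d`. -/
def Cds (d : ℕ) (s : ℝ) : ℝ :=
  (1 - 2*s) / (volume (Metric.ball (0 : EuclideanSpace ℝ (Fin d)) 1)).toReal

/-- the (rescaled) weighted form `a_w(w,φ)` written with `G_s`. -/
def Bform (d : ℕ) (s : ℝ) (Ω : Set (EuclideanSpace ℝ (Fin d)))
    (w φ : EuclideanSpace ℝ (Fin d) → ℝ) : ℝ :=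
  Cds d s * ∫ p in QΩ Ω, Gs d s (dq w p) * dq φ p / ‖p.1 - p.2‖ ^ ((d:ℝ) - 1 + 2*s)

lemma f_nonneg (d : ℕ) (s r : ℝ) : 0 ≤ (1 + r^2) ^ (-(((d:ℝ) + 1 + 2*s)/2)) :=
  Real.rpow_nonneg (by positivity) _

lemma f_cont (d : ℕ) (s : ℝ) :
    Continuous fun r : ℝ => (1 + r^2) ^ (-(((d:ℝ) + 1 + 2*s)/2)) :=
  (continuous_const.add (continuous_id.pow 2)).rpow_const fun x => Or.inl (ne_of_gt (by show (0:ℝ) < 1 + x^2; positivity))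

lemma f_intOn (d : ℕ) (hd : 1 ≤ d) (s : ℝ) (hs0 : 0 < s) :
    IntegrableOn (fun r : ℝ => (1 + r^2) ^ (-(((d:ℝ) + 1 + 2*s)/2))) (Ioi 0) := by
  have hq : (1:ℝ) ≤ (d:ℝ) := by exact_mod_cast hd
  have hsplit : Ioc (0:ℝ) 1 ∪ Ioi (1:ℝ) = Ioi (0:ℝ) := Ioc_union_Ioi_eq_Ioi zero_le_one
  rw [← hsplit]
  refine IntegrableOn.union ?_ ?_
  · exact ((f_cont d s).integrableOn_Icc (a := 0) (b := 1)).mono_set Ioc_subset_Icc_self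
  · have hexp : -(2 * (((d:ℝ) + 1 + 2*s)/2)) < -1 := by nlinarith
    refine Integrable.mono (integrableOn_Ioi_rpow_of_lt hexp one_pos)
      ((f_cont d s).aestronglyMeasurable) ?_
    refine (ae_restrict_iff' measurableSet_Ioi).mpr (ae_of_all _ fun x hx => ?_)
    have hx1 : (1:ℝ) < x := hx
    have hx0 : (0:ℝ) < x := lt_trans one_pos hx1
    rw [Real.norm_of_nonneg (f_nonneg d s x),
      Real.norm_of_nonneg (Real.rpow_nonneg hx0.le _)]
    have h1 : (1 + x^2) ^ (-(((d:ℝ) + 1 + 2*s)/2)) ≤ (x^2) ^ (-(((d:ℝ) + 1 + 2*s)/2)) := by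
      refine Real.rpow_le_rpow_of_nonpos (by positivity) (by nlinarith) ?_
      nlinarith
    refine h1.trans_eq ?_
    rw [← Real.rpow_natCast x 2, ← Real.rpow_mul hx0.le]
    norm_num

lemma Ks_nonneg (d : ℕ) (s : ℝ) : 0 ≤ Ks d s :=
  integral_nonneg fun r => f_nonneg d s r

lemma Gs_neg (d : ℕ) (s ρ : ℝ) : Gs d s (-ρ) = -Gs d s ρ := by
  unfold Gs
  have h := intervalIntegral.integral_comp_neg (a := (0:ℝ)) (b := -ρ)
      (f := fun r : ℝ => (1 + r^2) ^ (-(((d:ℝ) + 1 + 2*s)/2)))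
  simp only [neg_sq, neg_neg, neg_zero] at h
  rw [h, intervalIntegral.integral_symm]

lemma Gs_le_Ks (d : ℕ) (hd : 1 ≤ d) (s : ℝ) (hs0 : 0 < s) {ρ : ℝ} (hρ : 0 ≤ ρ) :
    Gs d s ρ ≤ Ks d s := by
  unfold Gs Ks
  rw [intervalIntegral.integral_of_le hρ]
  refine setIntegral_mono_set (f_intOn d hd s hs0) (ae_of_all _ fun r => f_nonneg d s r) ?_
  exact HasSubset.Subset.eventuallyLE Ioc_subset_Ioi_self

lemma abs_Gs_le (d : ℕ) (hd : 1 ≤ d) (s : ℝ) (hs0 : 0 < s) (ρ : ℝ) :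
    |Gs d s ρ| ≤ Ks d s := by
  rcases le_or_gt 0 ρ with h | h
  · have hnn : 0 ≤ Gs d s ρ := intervalIntegral.integral_nonneg h fun x _ => f_nonneg d s x
    rw [abs_of_nonneg hnn]
    exact Gs_le_Ks d hd s hs0 h
  · have h2 : Gs d s ρ = -Gs d s (-ρ) := by rw [Gs_neg, neg_neg]
    have hnn : 0 ≤ Gs d s (-ρ) :=
      intervalIntegral.integral_nonneg (by linarith) fun x _ => f_nonneg d s x
    rw [h2, abs_neg, abs_of_nonneg hnn]
    exact Gs_le_Ks d hd s hs0 (by linarith)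

theorem stmt12 (d : ℕ) (hd : 1 ≤ d) (s : ℝ) (hs : s ∈ Set.Ioo (0:ℝ) (1/2))
    (Ω : Set (EuclideanSpace ℝ (Fin d)))
    (V0 V0h : Set (EuclideanSpace ℝ (Fin d) → ℝ)) (hV : V0h ⊆ V0)
    (u uh vh : EuclideanSpace ℝ (Fin d) → ℝ)
    -- Euler–Lagrange relations for the continuous and discrete minimizers
    (hu : ∀ φ ∈ V0, Bform d s Ω u φ = 0)
    (huh : ∀ φ ∈ V0h, Bform d s Ω uh φ = 0)
    (hmem : (fun x => uh x - vh x) ∈ V0h)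
    -- integrability of the relevant integrands
    (hI1 : IntegrableOn (fun p => (Gs d s (dq u p) - Gs d s (dq uh p)) *
        dq (fun x => u x - uh x) p / ‖p.1 - p.2‖ ^ ((d:ℝ) - 1 + 2*s)) (QΩ Ω))
    (hI2 : IntegrableOn (fun p => (Gs d s (dq u p) - Gs d s (dq uh p)) *
        dq (fun x => uh x - vh x) p / ‖p.1 - p.2‖ ^ ((d:ℝ) - 1 + 2*s)) (QΩ Ω))
    (hI3 : IntegrableOn (fun p => Gs d s (dq u p) *
        dq (fun x => uh x - vh x) p / ‖p.1 - p.2‖ ^ ((d:ℝ) - 1 + 2*s)) (QΩ Ω))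
    (hI4 : IntegrableOn (fun p => |(u p.1 - vh p.1) - (u p.2 - vh p.2)| /
        ‖p.1 - p.2‖ ^ ((d:ℝ) + 2*s)) (QΩ Ω)) :
    (Cds d s * ∫ p in QΩ Ω, (Gs d s (dq u p) - Gs d s (dq uh p)) *
          dq (fun x => u x - uh x) p / ‖p.1 - p.2‖ ^ ((d:ℝ) - 1 + 2*s))
      = Cds d s * ∫ p in QΩ Ω, (Gs d s (dq u p) - Gs d s (dq uh p)) *
          dq (fun x => u x - vh x) p / ‖p.1 - p.2‖ ^ ((d:ℝ) - 1 + 2*s) ∧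
    (Cds d s * ∫ p in QΩ Ω, (Gs d s (dq u p) - Gs d s (dq uh p)) *
          dq (fun x => u x - uh x) p / ‖p.1 - p.2‖ ^ ((d:ℝ) - 1 + 2*s))
      ≤ 2 * Cds d s * Ks d s *
          ∫ p in QΩ Ω, |(u p.1 - vh p.1) - (u p.2 - vh p.2)| / ‖p.1 - p.2‖ ^ ((d:ℝ) + 2*s) := by
  obtain ⟨hs0, hs1⟩ := hs
  have hd1 : (1:ℝ) ≤ (d:ℝ) := by exact_mod_cast hd
  have hC : 0 < Cds d s := by
    unfold Cds
    apply div_pos (by linarith)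
    exact ENNReal.toReal_pos (Metric.measure_ball_pos _ _ one_pos).ne' measure_ball_lt_top.ne
  have hBu := hu _ (hV hmem)
  have hBuh := huh _ hmem
  unfold Bform at hBu hBuh
  have hJ3 : (∫ p in QΩ Ω, Gs d s (dq u p) *
      dq (fun x => uh x - vh x) p / ‖p.1 - p.2‖ ^ ((d:ℝ) - 1 + 2*s)) = 0 :=
    (mul_eq_zero.mp hBu).resolve_left hC.ne'
  have hJ3' : (∫ p in QΩ Ω, Gs d s (dq uh p) *
      dq (fun x => uh x - vh x) p / ‖p.1 - p.2‖ ^ ((d:ℝ) - 1 + 2*s)) = 0 :=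
    (mul_eq_zero.mp hBuh).resolve_left hC.ne'
  have hGuhInt : IntegrableOn (fun p => Gs d s (dq uh p) *
      dq (fun x => uh x - vh x) p / ‖p.1 - p.2‖ ^ ((d:ℝ) - 1 + 2*s)) (QΩ Ω) := by
    have heq : (fun p => Gs d s (dq uh p) *
        dq (fun x => uh x - vh x) p / ‖p.1 - p.2‖ ^ ((d:ℝ) - 1 + 2*s))
        = fun p => (Gs d s (dq u p) *
            dq (fun x => uh x - vh x) p / ‖p.1 - p.2‖ ^ ((d:ℝ) - 1 + 2*s))
          - ((Gs d s (dq u p) - Gs d s (dq uh p)) *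
            dq (fun x => uh x - vh x) p / ‖p.1 - p.2‖ ^ ((d:ℝ) - 1 + 2*s)) :=
      funext fun p => by ring
    rw [heq]; exact hI3.sub hI2
  have h0 : (∫ p in QΩ Ω, (Gs d s (dq u p) - Gs d s (dq uh p)) *
      dq (fun x => uh x - vh x) p / ‖p.1 - p.2‖ ^ ((d:ℝ) - 1 + 2*s)) = 0 := by
    calc (∫ p in QΩ Ω, (Gs d s (dq u p) - Gs d s (dq uh p)) *
        dq (fun x => uh x - vh x) p / ‖p.1 - p.2‖ ^ ((d:ℝ) - 1 + 2*s))
        = ∫ p in QΩ Ω, (Gs d s (dq u p) *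
            dq (fun x => uh x - vh x) p / ‖p.1 - p.2‖ ^ ((d:ℝ) - 1 + 2*s)
          - Gs d s (dq uh p) *
            dq (fun x => uh x - vh x) p / ‖p.1 - p.2‖ ^ ((d:ℝ) - 1 + 2*s)) := by
          refine integral_congr_ae (ae_of_all _ fun p => ?_)
          ring
      _ = (∫ p in QΩ Ω, Gs d s (dq u p) *
            dq (fun x => uh x - vh x) p / ‖p.1 - p.2‖ ^ ((d:ℝ) - 1 + 2*s))
          - ∫ p in QΩ Ω, Gs d s (dq uh p) *
            dq (fun x => uh x - vh x) p / ‖p.1 - p.2‖ ^ ((d:ℝ) - 1 + 2*s) :=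
          integral_sub hI3 hGuhInt
      _ = 0 := by rw [hJ3, hJ3', sub_zero]
  have hIuvh : IntegrableOn (fun p => (Gs d s (dq u p) - Gs d s (dq uh p)) *
      dq (fun x => u x - vh x) p / ‖p.1 - p.2‖ ^ ((d:ℝ) - 1 + 2*s)) (QΩ Ω) := by
    have heq : (fun p => (Gs d s (dq u p) - Gs d s (dq uh p)) *
        dq (fun x => u x - vh x) p / ‖p.1 - p.2‖ ^ ((d:ℝ) - 1 + 2*s))
        = fun p => ((Gs d s (dq u p) - Gs d s (dq uh p)) *
            dq (fun x => u x - uh x) p / ‖p.1 - p.2‖ ^ ((d:ℝ) - 1 + 2*s))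
          + ((Gs d s (dq u p) - Gs d s (dq uh p)) *
            dq (fun x => uh x - vh x) p / ‖p.1 - p.2‖ ^ ((d:ℝ) - 1 + 2*s)) :=
      funext fun p => by simp only [dq]; ring
    rw [heq]; exact hI1.add hI2
  have key : (∫ p in QΩ Ω, (Gs d s (dq u p) - Gs d s (dq uh p)) *
      dq (fun x => u x - uh x) p / ‖p.1 - p.2‖ ^ ((d:ℝ) - 1 + 2*s))
      = (∫ p in QΩ Ω, (Gs d s (dq u p) - Gs d s (dq uh p)) *
          dq (fun x => u x - vh x) p / ‖p.1 - p.2‖ ^ ((d:ℝ) - 1 + 2*s))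
        - ∫ p in QΩ Ω, (Gs d s (dq u p) - Gs d s (dq uh p)) *
          dq (fun x => uh x - vh x) p / ‖p.1 - p.2‖ ^ ((d:ℝ) - 1 + 2*s) := by
    rw [← integral_sub hIuvh hI2]
    refine integral_congr_ae (ae_of_all _ fun p => ?_)
    simp only [dq]
    ring
  have part1 : (Cds d s * ∫ p in QΩ Ω, (Gs d s (dq u p) - Gs d s (dq uh p)) *
          dq (fun x => u x - uh x) p / ‖p.1 - p.2‖ ^ ((d:ℝ) - 1 + 2*s))
      = Cds d s * ∫ p in QΩ Ω, (Gs d s (dq u p) - Gs d s (dq uh p)) *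
          dq (fun x => u x - vh x) p / ‖p.1 - p.2‖ ^ ((d:ℝ) - 1 + 2*s) := by
    rw [key, h0, sub_zero]
  refine ⟨part1, ?_⟩
  have hb : ∀ p : EuclideanSpace ℝ (Fin d) × EuclideanSpace ℝ (Fin d),
      (Gs d s (dq u p) - Gs d s (dq uh p)) *
        dq (fun x => u x - vh x) p / ‖p.1 - p.2‖ ^ ((d:ℝ) - 1 + 2*s)
      ≤ 2 * Ks d s *
        (|(u p.1 - vh p.1) - (u p.2 - vh p.2)| / ‖p.1 - p.2‖ ^ ((d:ℝ) + 2*s)) := by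
    intro p
    have hA : |Gs d s (dq u p) - Gs d s (dq uh p)| ≤ 2 * Ks d s := by
      have h1 := abs_le.mp (abs_Gs_le d hd s hs0 (dq u p))
      have h2 := abs_le.mp (abs_Gs_le d hd s hs0 (dq uh p))
      exact abs_le.mpr ⟨by linarith [h1.1, h2.2], by linarith [h1.2, h2.1]⟩
    rcases eq_or_lt_of_le (norm_nonneg (p.1 - p.2)) with hn | hn
    · have he1 : ((d:ℝ) - 1 + 2*s) ≠ 0 := by
        have : (0:ℝ) < (d:ℝ) - 1 + 2*s := by linarith
        exact this.ne'
      have he2 : ((d:ℝ) + 2*s) ≠ 0 := by positivity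
      simp only [dq, ← hn, Real.zero_rpow he1, Real.zero_rpow he2, div_zero, mul_zero, zero_div]
      positivity
    · have hn' : (0:ℝ) < ‖p.1 - p.2‖ := hn
      have hnp : (0:ℝ) < ‖p.1 - p.2‖ ^ ((d:ℝ) - 1 + 2*s) := Real.rpow_pos_of_pos hn' _
      calc (Gs d s (dq u p) - Gs d s (dq uh p)) *
            dq (fun x => u x - vh x) p / ‖p.1 - p.2‖ ^ ((d:ℝ) - 1 + 2*s)
          ≤ |(Gs d s (dq u p) - Gs d s (dq uh p)) *
            dq (fun x => u x - vh x) p / ‖p.1 - p.2‖ ^ ((d:ℝ) - 1 + 2*s)| := le_abs_self _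
        _ = |Gs d s (dq u p) - Gs d s (dq uh p)| *
            (|(u p.1 - vh p.1) - (u p.2 - vh p.2)| / ‖p.1 - p.2‖) /
            ‖p.1 - p.2‖ ^ ((d:ℝ) - 1 + 2*s) := by
            simp only [dq]
            rw [abs_div, abs_mul, abs_div, abs_of_pos hn', abs_of_pos hnp]
        _ ≤ 2 * Ks d s *
            (|(u p.1 - vh p.1) - (u p.2 - vh p.2)| / ‖p.1 - p.2‖) /
            ‖p.1 - p.2‖ ^ ((d:ℝ) - 1 + 2*s) := by
            apply div_le_div_of_nonneg_right ?_ hnp.le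
            exact mul_le_mul_of_nonneg_right hA (by positivity)
        _ = 2 * Ks d s *
            (|(u p.1 - vh p.1) - (u p.2 - vh p.2)| / ‖p.1 - p.2‖ ^ ((d:ℝ) + 2*s)) := by
            rw [show ((d:ℝ) + 2*s) = ((d:ℝ) - 1 + 2*s) + 1 by ring,
              Real.rpow_add_one hn'.ne']
            ring
  have hmono : (∫ p in QΩ Ω, (Gs d s (dq u p) - Gs d s (dq uh p)) *
      dq (fun x => u x - vh x) p / ‖p.1 - p.2‖ ^ ((d:ℝ) - 1 + 2*s))
      ≤ ∫ p in QΩ Ω, 2 * Ks d s *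
        (|(u p.1 - vh p.1) - (u p.2 - vh p.2)| / ‖p.1 - p.2‖ ^ ((d:ℝ) + 2*s)) :=
    integral_mono hIuvh (hI4.const_mul _) hb
  rw [integral_const_mul] at hmono
  calc (Cds d s * ∫ p in QΩ Ω, (Gs d s (dq u p) - Gs d s (dq uh p)) *
          dq (fun x => u x - uh x) p / ‖p.1 - p.2‖ ^ ((d:ℝ) - 1 + 2*s))
      = Cds d s * ∫ p in QΩ Ω, (Gs d s (dq u p) - Gs d s (dq uh p)) *
          dq (fun x => u x - vh x) p / ‖p.1 - p.2‖ ^ ((d:ℝ) - 1 + 2*s) := part1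
    _ ≤ Cds d s * (2 * Ks d s *
          ∫ p in QΩ Ω, |(u p.1 - vh p.1) - (u p.2 - vh p.2)| / ‖p.1 - p.2‖ ^ ((d:ℝ) + 2*s)) :=
        mul_le_mul_of_nonneg_left hmono hC.le
    _ = 2 * Cds d s * Ks d s *
          ∫ p in QΩ Ω, |(u p.1 - vh p.1) - (u p.2 - vh p.2)| / ‖p.1 - p.2‖ ^ ((d:ℝ) + 2*s) := by
        ring

end
end
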